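/- arXiv:1810.12970 — 2 statements merged into one kernel-verified Lean document; each statement's English description precedes it below -/
import Mathlib

section
/- Let E and F be Banach spaces over 𝕜 (= ℝ or ℂ), m ≥ 1, and P ∈ 𝒫(^mE;F). The following are equivalent: (a) P has finite rank, i.e. the linear span of the range of P is finite dimensional; (b) for every k ≥ 1 the continuous linear operator Δ_k^1 P : 𝒫(^kF) → 𝒫(^{mk}E), q ↦ q ∘ P, has finite rank; (c) there exists some k ≥ 1 such that Δ_k^1 P has finite rank. -/
open scoped NNReal ENNReal

/-- `P : E → F` is a continuous `m`-homogeneous polynomial: it is generated by a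
continuous `m`-linear map. -/
def IsHomPoly (𝕜 : Type*) [RCLike 𝕜] (m : ℕ) {E F : Type*}
    [NormedAddCommGroup E] [NormedSpace 𝕜 E] [NormedAddCommGroup F] [NormedSpace 𝕜 F]
    (P : E → F) : Prop :=
  ∃ A : ContinuousMultilinearMap 𝕜 (fun _ : Fin m => E) F, ∀ x, P x = A (fun _ => x)

/-- The sup norm over the closed unit ball. -/
noncomputable def polyNorm {E F : Type*} [Norm E] [Norm F] (P : E → F) : ℝ :=
  sSup ((fun x => ‖P x‖) '' {x : E | ‖x‖ ≤ 1})

/-- The space `𝒫(^m E; F)` of continuous `m`-homogeneous polynomials. -/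
structure HPoly (𝕜 : Type*) [RCLike 𝕜] (m : ℕ) (E F : Type*)
    [NormedAddCommGroup E] [NormedSpace 𝕜 E] [NormedAddCommGroup F] [NormedSpace 𝕜 F] where
  toFun : E → F
  isPoly' : IsHomPoly 𝕜 m toFun

namespace HPoly

variable {𝕜 : Type*} [RCLike 𝕜] {m : ℕ} {E F : Type*}
  [NormedAddCommGroup E] [NormedSpace 𝕜 E] [NormedAddCommGroup F] [NormedSpace 𝕜 F]

instance : FunLike (HPoly 𝕜 m E F) E F where
  coe P := P.toFun
  coe_injective := by rintro ⟨f, hf⟩ ⟨g, hg⟩ h; simpa using h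

@[ext] theorem ext {P Q : HPoly 𝕜 m E F} (h : ∀ x, P x = Q x) : P = Q := DFunLike.ext _ _ h

theorem isPoly (P : HPoly 𝕜 m E F) : IsHomPoly 𝕜 m ⇑P := P.isPoly'

instance : Zero (HPoly 𝕜 m E F) := ⟨⟨fun _ => 0, ⟨0, by simp⟩⟩⟩

@[simp] theorem zero_apply (x : E) : (0 : HPoly 𝕜 m E F) x = 0 := rfl

instance : Add (HPoly 𝕜 m E F) :=
  ⟨fun P Q => ⟨fun x => P x + Q x, by
    obtain ⟨A, hA⟩ := P.isPoly'
    obtain ⟨B, hB⟩ := Q.isPoly'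
    refine ⟨A + B, fun x => ?_⟩
    show P.toFun x + Q.toFun x = (A + B) fun _ => x
    rw [ContinuousMultilinearMap.add_apply, hA x, hB x]⟩⟩

@[simp] theorem add_apply (P Q : HPoly 𝕜 m E F) (x : E) : (P + Q) x = P x + Q x := rfl

instance : Neg (HPoly 𝕜 m E F) :=
  ⟨fun P => ⟨fun x => -P x, by
    obtain ⟨A, hA⟩ := P.isPoly'
    refine ⟨-A, fun x => ?_⟩
    show -P.toFun x = (-A) fun _ => x
    rw [ContinuousMultilinearMap.neg_apply, hA x]⟩⟩

@[simp] theorem neg_apply (P : HPoly 𝕜 m E F) (x : E) : (-P) x = -P x := rfl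

instance : SMul 𝕜 (HPoly 𝕜 m E F) :=
  ⟨fun c P => ⟨fun x => c • P x, by
    obtain ⟨A, hA⟩ := P.isPoly'
    refine ⟨c • A, fun x => ?_⟩
    show c • P.toFun x = (c • A) fun _ => x
    rw [ContinuousMultilinearMap.smul_apply, hA x]⟩⟩

@[simp] theorem smul_apply (c : 𝕜) (P : HPoly 𝕜 m E F) (x : E) : (c • P) x = c • P x := rfl

instance : AddCommGroup (HPoly 𝕜 m E F) where
  add_assoc P Q R := by ext x; simp [add_assoc]
  zero_add P := by ext x; simp
  add_zero P := by ext x; simp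
  add_comm P Q := by ext x; simp [add_comm]
  neg_add_cancel P := by ext x; simp
  nsmul := nsmulRec
  zsmul := zsmulRec

instance : Module 𝕜 (HPoly 𝕜 m E F) where
  one_smul P := by ext x; simp
  mul_smul a b P := by ext x; simp [mul_smul]
  smul_zero a := by ext x; simp
  smul_add a P Q := by ext x; simp
  add_smul a b P := by ext x; simp [add_smul]
  zero_smul P := by ext x; simp

theorem bddAbove_image (P : HPoly 𝕜 m E F) :
    BddAbove ((fun x => ‖P x‖) '' {x : E | ‖x‖ ≤ 1}) := by
  obtain ⟨A, hA⟩ := P.isPoly'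
  refine ⟨‖A‖, ?_⟩
  rintro r ⟨x, hx, rfl⟩
  show ‖P.toFun x‖ ≤ ‖A‖
  rw [hA x]
  calc ‖A fun _ => x‖ ≤ ‖A‖ * ∏ _i : Fin m, ‖x‖ := A.le_opNorm _
    _ ≤ ‖A‖ * 1 := by
        refine mul_le_mul_of_nonneg_left ?_ (norm_nonneg A)
        rw [Finset.prod_const]
        exact pow_le_one₀ (norm_nonneg x) hx
    _ = ‖A‖ := mul_one _

theorem polyNorm_coe_nonneg (P : HPoly 𝕜 m E F) : 0 ≤ polyNorm ⇑P :=
  le_trans (norm_nonneg (P 0)) (le_csSup (bddAbove_image P) ⟨0, by simp, rfl⟩)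

noncomputable instance : NormedAddCommGroup (HPoly 𝕜 m E F) :=
  AddGroupNorm.toNormedAddCommGroup
    { toFun := fun P => polyNorm (⇑P)
      map_zero' := by
        simp only [polyNorm]
        have h : (fun x : E => ‖(0 : HPoly 𝕜 m E F) x‖) '' {x : E | ‖x‖ ≤ 1} = {0} := by
          apply Set.eq_singleton_iff_nonempty_unique_mem.2
          constructor
          · exact ⟨0, ⟨0, by simp, by simp⟩⟩
          · rintro r ⟨x, -, rfl⟩; simp
        rw [h, csSup_singleton]
      add_le' := fun P Q => by
        apply Real.sSup_le
        · rintro r ⟨x, hx, rfl⟩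
          calc ‖(P + Q) x‖ ≤ ‖P x‖ + ‖Q x‖ := norm_add_le _ _
            _ ≤ polyNorm ⇑P + polyNorm ⇑Q :=
                add_le_add (le_csSup (bddAbove_image P) ⟨x, hx, rfl⟩)
                  (le_csSup (bddAbove_image Q) ⟨x, hx, rfl⟩)
        · exact add_nonneg (polyNorm_coe_nonneg P) (polyNorm_coe_nonneg Q)
      neg' := fun P => by simp [polyNorm]
      eq_zero_of_map_eq_zero' := fun P h => by
        have h' : polyNorm ⇑P = 0 := h
        have hball : ∀ x : E, ‖x‖ ≤ 1 → P x = 0 := by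
          intro x hx
          have h1 : ‖P x‖ ≤ polyNorm ⇑P := le_csSup (bddAbove_image P) ⟨x, hx, rfl⟩
          rw [h'] at h1
          exact norm_le_zero_iff.1 h1
        ext x
        rcases eq_or_ne x 0 with rfl | hx
        · simpa using hball 0 (by simp)
        · obtain ⟨A, hA⟩ := P.isPoly'
          set c : 𝕜 := ((‖x‖ : ℝ) : 𝕜) with hcdef
          have hc : c ≠ 0 := by
            simp only [hcdef, ne_eq, RCLike.ofReal_eq_zero]
            exact norm_ne_zero_iff.2 hx
          have hu : ‖(c⁻¹ • x : E)‖ ≤ 1 := by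
            rw [norm_smul, norm_inv, hcdef, RCLike.norm_ofReal,
              abs_of_nonneg (norm_nonneg x),
              inv_mul_cancel₀ (norm_ne_zero_iff.2 hx)]
          have h0 : P (c⁻¹ • x) = 0 := hball _ hu
          have key : P x = c ^ m • P (c⁻¹ • x) := by
            show P.toFun x = c ^ m • P.toFun (c⁻¹ • x)
            rw [hA x, hA (c⁻¹ • x)]
            have h2 := A.map_smul_univ (fun _ : Fin m => c) (fun _ : Fin m => c⁻¹ • x)
            rw [Finset.prod_const] at h2
            have h3 : (fun _ : Fin m => c • c⁻¹ • x) = fun _ : Fin m => x := by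
              funext i
              rw [smul_smul, mul_inv_cancel₀ hc, one_smul]
            rw [h3] at h2
            simpa using h2
          rw [key, h0, smul_zero]
          simp }

theorem norm_def (P : HPoly 𝕜 m E F) : ‖P‖ = polyNorm ⇑P := rfl

noncomputable instance : NormedSpace 𝕜 (HPoly 𝕜 m E F) :=
  { (inferInstance : Module 𝕜 (HPoly 𝕜 m E F)) with
    norm_smul_le := fun c P => by
      show polyNorm ⇑(c • P) ≤ ‖c‖ * polyNorm ⇑P
      apply Real.sSup_le
      · rintro r ⟨x, hx, rfl⟩
        show ‖(c • P) x‖ ≤ _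
        rw [smul_apply, norm_smul]
        exact mul_le_mul_of_nonneg_left
          (le_csSup (bddAbove_image P) ⟨x, hx, rfl⟩) (norm_nonneg c)
      · exact mul_nonneg (norm_nonneg c) (polyNorm_coe_nonneg P) }

end HPoly

namespace HPoly

variable {𝕜 : Type*} [RCLike 𝕜] {E F : Type*}
  [NormedAddCommGroup E] [NormedSpace 𝕜 E] [NormedAddCommGroup F] [NormedSpace 𝕜 F]

@[simp] theorem mk_apply {m : ℕ} (f : E → F) (h) (x : E) :
    (⟨f, h⟩ : HPoly 𝕜 m E F) x = f x := rfl

theorem map_smul_pow {m : ℕ} (Q : HPoly 𝕜 m E F) (c : 𝕜) (x : E) :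
    Q (c • x) = c ^ m • Q x := by
  obtain ⟨A, hA⟩ := Q.isPoly
  rw [hA (c • x), hA x]
  have h2 := A.map_smul_univ (fun _ : Fin m => c) (fun _ : Fin m => x)
  rw [Finset.prod_const] at h2
  simpa using h2

theorem map_zero_of_pos {m : ℕ} (hm : 1 ≤ m) (Q : HPoly 𝕜 m E F) : Q (0 : E) = 0 := by
  have h := Q.map_smul_pow 0 0
  rw [zero_smul, zero_pow (by omega), zero_smul] at h
  exact h

theorem norm_apply_le_of_norm_le_one {m : ℕ} (Q : HPoly 𝕜 m E F) {x : E} (hx : ‖x‖ ≤ 1) :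
    ‖Q x‖ ≤ ‖Q‖ :=
  le_csSup (bddAbove_image Q) ⟨x, hx, rfl⟩

theorem norm_apply_le {m : ℕ} (hm : 1 ≤ m) (Q : HPoly 𝕜 m E F) (x : E) :
    ‖Q x‖ ≤ ‖Q‖ * ‖x‖ ^ m := by
  rcases eq_or_ne x 0 with rfl | hx
  · rw [map_zero_of_pos hm, norm_zero, norm_zero, zero_pow (by omega), mul_zero]
  · have hxn : ‖x‖ ≠ 0 := norm_ne_zero_iff.2 hx
    set c : 𝕜 := ((‖x‖ : ℝ) : 𝕜) with hcdef
    have hcn : ‖c‖ = ‖x‖ := by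
      rw [hcdef, RCLike.norm_ofReal, abs_of_nonneg (norm_nonneg x)]
    have hc : c ≠ 0 := by
      simp only [hcdef, ne_eq, RCLike.ofReal_eq_zero]; exact hxn
    have hu : ‖(c⁻¹ • x : E)‖ ≤ 1 := by
      rw [norm_smul, norm_inv, hcn, inv_mul_cancel₀ hxn]
    have key : Q x = c ^ m • Q (c⁻¹ • x) := by
      rw [map_smul_pow, smul_smul, ← mul_pow, mul_inv_cancel₀ hc, one_pow, one_smul]
    rw [key, norm_smul, norm_pow, hcn, mul_comm]
    exact mul_le_mul_of_nonneg_right (norm_apply_le_of_norm_le_one Q hu) (by positivity)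

theorem norm_le {m : ℕ} (Q : HPoly 𝕜 m E F) {C : ℝ} (hC : 0 ≤ C)
    (h : ∀ x : E, ‖x‖ ≤ 1 → ‖Q x‖ ≤ C) : ‖Q‖ ≤ C :=
  Real.sSup_le (by rintro r ⟨x, hx, rfl⟩; exact h x hx) hC

theorem isHomPoly_comp {m k : ℕ} (hm : 1 ≤ m) {P : E → F} (hP : IsHomPoly 𝕜 m P)
    (q : HPoly 𝕜 k F 𝕜) : IsHomPoly 𝕜 (m * k) (fun x => q (P x)) := by
  obtain ⟨A, hA⟩ := hP
  obtain ⟨B, hB⟩ := q.isPoly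
  set p : FormalMultilinearSeries 𝕜 E F :=
    fun n => if h : n = m then A.domDomCongr (finCongr h.symm) else 0 with hp
  have hsum : (List.replicate k m).sum = m * k := by
    rw [List.sum_replicate, smul_eq_mul, mul_comm]
  set c : Composition (m * k) :=
    ⟨List.replicate k m, fun {i} hi => by rw [List.eq_of_mem_replicate hi]; omega, hsum⟩ with hc
  have hlen : c.length = k := List.length_replicate
  refine ⟨(B.domDomCongr (finCongr hlen.symm)).compAlongComposition p c, fun x => ?_⟩
  rw [ContinuousMultilinearMap.compAlongComposition_apply]
  have hkey : ∀ (j : ℕ), j = m → ∀ (v : Fin j → E), (∀ i, v i = x) → p j v = P x := by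
    rintro j rfl v hv
    have hv' : v = fun _ => x := funext hv
    subst hv'
    simp [hp, hA]
  have happ : p.applyComposition c (fun _ => x) = fun _ => P x := by
    funext i
    have hb : c.blocksFun i = m := List.eq_of_mem_replicate (c.blocksFun_mem_blocks i)
    exact hkey _ hb _ (fun _ => rfl)
  rw [happ]
  simp [hB]

/-- The composed polynomial `q ∘ P` as an element of `HPoly 𝕜 (m*k) E 𝕜`. -/
noncomputable def compPoly {m k : ℕ} (hm : 1 ≤ m) (P : E → F) (hP : IsHomPoly 𝕜 m P)
    (q : HPoly 𝕜 k F 𝕜) : HPoly 𝕜 (m * k) E 𝕜 :=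
  ⟨fun x => q (P x), isHomPoly_comp hm hP q⟩

@[simp] theorem compPoly_apply {m k : ℕ} (hm : 1 ≤ m) (P : E → F) (hP : IsHomPoly 𝕜 m P)
    (q : HPoly 𝕜 k F 𝕜) (x : E) : compPoly hm P hP q x = q (P x) := rfl

/-- The operator `Δₖ¹ P` as a continuous linear map. -/
noncomputable def delta {m k : ℕ} (hm : 1 ≤ m) (hk : 1 ≤ k) (P : E → F)
    (hP : IsHomPoly 𝕜 m P) : HPoly 𝕜 k F 𝕜 →L[𝕜] HPoly 𝕜 (m * k) E 𝕜 :=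
  LinearMap.mkContinuous
    { toFun := fun q => compPoly hm P hP q
      map_add' := fun q₁ q₂ => by ext x; rfl
      map_smul' := fun c q => by ext x; rfl }
    ((max ‖hP.choose‖ 1) ^ k)
    (fun q => by
      set A := hP.choose with hAdef
      have hA : ∀ x, P x = A fun _ => x := hP.choose_spec
      have hbound : ∀ x : E, ‖x‖ ≤ 1 → ‖P x‖ ≤ max ‖A‖ 1 := by
        intro x hx
        rw [hA x]
        calc ‖A fun _ => x‖ ≤ ‖A‖ * ∏ _i : Fin m, ‖x‖ := A.le_opNorm _
          _ ≤ ‖A‖ * 1 := by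
              refine mul_le_mul_of_nonneg_left ?_ (norm_nonneg A)
              rw [Finset.prod_const]
              exact pow_le_one₀ (norm_nonneg x) hx
          _ = ‖A‖ := mul_one _
          _ ≤ max ‖A‖ 1 := le_max_left _ _
      refine norm_le _ (by positivity) (fun x hx => ?_)
      show ‖q (P x)‖ ≤ _
      calc ‖q (P x)‖ ≤ ‖q‖ * ‖P x‖ ^ k := norm_apply_le hk q (P x)
        _ ≤ ‖q‖ * (max ‖A‖ 1) ^ k := by
            refine mul_le_mul_of_nonneg_left ?_ (norm_nonneg q)
            exact pow_le_pow_left₀ (norm_nonneg _) (hbound x hx) k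
        _ = (max ‖A‖ 1) ^ k * ‖q‖ := mul_comm _ _)

@[simp] theorem delta_apply {m k : ℕ} (hm : 1 ≤ m) (hk : 1 ≤ k) (P : E → F)
    (hP : IsHomPoly 𝕜 m P) (q : HPoly 𝕜 k F 𝕜) (x : E) :
    delta hm hk P hP q x = q (P x) := rfl

/-- The diagonal map from continuous multilinear maps to homogeneous polynomials. -/
def diagL (k : ℕ) :
    ContinuousMultilinearMap 𝕜 (fun _ : Fin k => E) 𝕜 →ₗ[𝕜] HPoly 𝕜 k E 𝕜 where
  toFun B := ⟨fun x => B fun _ => x, ⟨B, fun _ => rfl⟩⟩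
  map_add' B₁ B₂ := by ext x; rfl
  map_smul' c B := by ext x; rfl

theorem finiteDimensional_hpoly (k : ℕ) [FiniteDimensional 𝕜 E] :
    FiniteDimensional 𝕜 (HPoly 𝕜 k E 𝕜) := by
  haveI : FiniteDimensional 𝕜 (ContinuousMultilinearMap 𝕜 (fun _ : Fin k => E) 𝕜) :=
    FiniteDimensional.of_injective
      (ContinuousMultilinearMap.toMultilinearMapLinear
        (R' := 𝕜) (A := 𝕜) (M₁ := fun _ : Fin k => E) (M₂ := 𝕜))
      ContinuousMultilinearMap.toMultilinearMap_injective
  refine Module.Finite.of_surjective (diagL (𝕜 := 𝕜) (E := E) k) (fun q => ?_)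
  obtain ⟨B, hB⟩ := q.isPoly
  exact ⟨B, by ext x; exact (hB x).symm⟩

/-- Restriction of a homogeneous polynomial to a submodule. -/
def restrictL (k : ℕ) (S : Submodule 𝕜 F) : HPoly 𝕜 k F 𝕜 →ₗ[𝕜] HPoly 𝕜 k S 𝕜 where
  toFun q := ⟨fun s => q (s : F), by
    obtain ⟨B, hB⟩ := q.isPoly
    exact ⟨B.compContinuousLinearMap (fun _ => S.subtypeL), fun s => by simp [hB]⟩⟩
  map_add' q₁ q₂ := by ext x; simp
  map_smul' c q := by ext x; simp

/-- Evaluation at a point as a linear functional on `HPoly`. -/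
def evL {n : ℕ} (x : E) : HPoly 𝕜 n E 𝕜 →ₗ[𝕜] 𝕜 where
  toFun Q := Q x
  map_add' _ _ := rfl
  map_smul' _ _ := rfl

theorem range_fd {m k : ℕ} (P : E → F)
    (hfd : FiniteDimensional 𝕜 (Submodule.span 𝕜 (Set.range P)))
    (T : HPoly 𝕜 k F 𝕜 →L[𝕜] HPoly 𝕜 (m * k) E 𝕜)
    (hT : ∀ (q : HPoly 𝕜 k F 𝕜) (x : E), T q x = q (P x)) :
    FiniteDimensional 𝕜
      (LinearMap.range (T : HPoly 𝕜 k F 𝕜 →ₗ[𝕜] HPoly 𝕜 (m * k) E 𝕜)) := by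
  set S := Submodule.span 𝕜 (Set.range P) with hS
  haveI : FiniteDimensional 𝕜 S := hfd
  haveI : FiniteDimensional 𝕜 (HPoly 𝕜 k S 𝕜) := finiteDimensional_hpoly k
  set r := restrictL (𝕜 := 𝕜) (F := F) k S with hr
  set Tl := (T : HPoly 𝕜 k F 𝕜 →ₗ[𝕜] HPoly 𝕜 (m * k) E 𝕜) with hTl
  have hker : LinearMap.ker r ≤ LinearMap.ker Tl := by
    intro q hq
    rw [LinearMap.mem_ker] at hq ⊢
    have hv : ∀ s : S, q (s : F) = 0 := by
      intro s
      have h2 : (r q) s = (0 : HPoly 𝕜 k S 𝕜) s := by rw [hq]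
      simpa [hr, restrictL] using h2
    ext x
    have h1 : P x ∈ S := Submodule.subset_span ⟨x, rfl⟩
    have h3 : Tl q x = T q x := rfl
    rw [h3, hT q x, zero_apply]
    exact hv ⟨P x, h1⟩
  haveI : FiniteDimensional 𝕜 (HPoly 𝕜 k F 𝕜 ⧸ LinearMap.ker r) :=
    Module.Finite.equiv (LinearMap.quotKerEquivRange r).symm
  have hrange : LinearMap.range Tl =
      LinearMap.range ((LinearMap.ker r).liftQ Tl hker) :=
    (Submodule.range_liftQ _ _ _).symm
  rw [hrange]
  infer_instance

theorem span_fd {m k : ℕ} (hk : 1 ≤ k) (P : E → F)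
    (T : HPoly 𝕜 k F 𝕜 →L[𝕜] HPoly 𝕜 (m * k) E 𝕜)
    (hT : ∀ (q : HPoly 𝕜 k F 𝕜) (x : E), T q x = q (P x))
    (hfin : FiniteDimensional 𝕜
      (LinearMap.range (T : HPoly 𝕜 k F 𝕜 →ₗ[𝕜] HPoly 𝕜 (m * k) E 𝕜))) :
    FiniteDimensional 𝕜 (Submodule.span 𝕜 (Set.range P)) := by
  classical
  set Tl := (T : HPoly 𝕜 k F 𝕜 →ₗ[𝕜] HPoly 𝕜 (m * k) E 𝕜) with hTl
  obtain ⟨b, hbsub, hbspan, hbind⟩ := exists_linearIndependent 𝕜 (Set.range P)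
  have hbfin : b.Finite := by
    by_contra hinf
    have hinf' : b.Infinite := hinf
    set n := Module.finrank 𝕜 (LinearMap.range Tl) with hn
    obtain ⟨s, hssub, hscard⟩ := hinf'.exists_subset_card_eq (n + 1)
    -- the inclusion of `s` into `b`
    set v : {y // y ∈ s} → F := fun i => (i : F) with hv
    have hsind : LinearIndependent 𝕜 v := by
      have h := hbind.comp
        (fun i : {y // y ∈ s} => (⟨(i : F), hssub i.2⟩ : {y // y ∈ b}))
        (fun a₁ a₂ hh => Subtype.ext (congrArg (fun z : {y // y ∈ b} => (z : F)) hh))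
      exact h
    set K := Submodule.span 𝕜 (Set.range v) with hK
    haveI : FiniteDimensional 𝕜 K :=
      FiniteDimensional.span_of_finite 𝕜 (Set.finite_range v)
    obtain ⟨π, hπ⟩ := (Submodule.ClosedComplemented.of_finiteDimensional K)
    set bs : Module.Basis {y // y ∈ s} 𝕜 K := Module.Basis.span hsind with hbs
    set φ : {y // y ∈ s} → (F →L[𝕜] 𝕜) :=
      fun i => (LinearMap.toContinuousLinearMap (bs.coord i)).comp π with hφdef
    have hφ : ∀ i j : {y // y ∈ s}, φ i (v j) = if j = i then 1 else 0 := by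
      intro i j
      have hvK : v j ∈ K := Submodule.subset_span (Set.mem_range_self j)
      have h1 : π (v j) = (⟨v j, hvK⟩ : K) := hπ ⟨v j, hvK⟩
      have h2 : (⟨v j, hvK⟩ : K) = bs j := (Module.Basis.span_apply hsind j).symm
      simp only [hφdef, ContinuousLinearMap.comp_apply, h1, h2,
        LinearMap.coe_toContinuousLinearMap']
      rw [Module.Basis.coord_apply, Module.Basis.repr_self, Finsupp.single_apply]
    set q : {y // y ∈ s} → HPoly 𝕜 k F 𝕜 := fun i =>
      ⟨fun y => (φ i y) ^ k,
        ⟨(ContinuousMultilinearMap.mkPiAlgebra 𝕜 (Fin k) 𝕜).compContinuousLinearMap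
          (fun _ => φ i), fun y => by simp [Finset.prod_const]⟩⟩ with hq
    have hxe : ∀ i : {y // y ∈ s}, ∃ x : E, P x = (i : F) :=
      fun i => hbsub (hssub i.2)
    choose xpt hxpt using hxe
    set w : {y // y ∈ s} → HPoly 𝕜 (m * k) E 𝕜 := fun i => T (q i) with hw
    have hwev : ∀ i j : {y // y ∈ s}, w i (xpt j) = if j = i then 1 else 0 := by
      intro i j
      have h1 : w i (xpt j) = q i (P (xpt j)) := hT (q i) (xpt j)
      rw [h1, hxpt j]
      have h2 : q i ((j : F)) = (φ i (v j)) ^ k := rfl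
      rw [h2, hφ i j]
      by_cases hij : j = i
      · simp [hij]
      · simp [hij, zero_pow (by omega : k ≠ 0)]
    have hwind : LinearIndependent 𝕜 w := by
      rw [Fintype.linearIndependent_iff]
      intro g hg j
      have h1 := congrArg (evL (𝕜 := 𝕜) (xpt j)) hg
      rw [map_sum, map_zero] at h1
      have h2 : ∀ i, evL (𝕜 := 𝕜) (xpt j) (g i • w i) = g i * (if j = i then 1 else 0) := by
        intro i
        rw [LinearMap.map_smul]
        have : evL (𝕜 := 𝕜) (xpt j) (w i) = if j = i then 1 else 0 := hwev i j
        rw [this, smul_eq_mul]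
      rw [Finset.sum_congr rfl (fun i _ => h2 i)] at h1
      simpa [Finset.sum_ite_eq] using h1
    set w' : {y // y ∈ s} → LinearMap.range Tl := fun i =>
      ⟨w i, LinearMap.mem_range_self Tl (q i)⟩ with hw'
    have hw'ind : LinearIndependent 𝕜 w' := by
      apply LinearIndependent.of_comp (LinearMap.range Tl).subtype
      exact hwind
    have hcard := hw'ind.fintype_card_le_finrank
    rw [Fintype.card_coe, hscard] at hcard
    omega
  have hfd : FiniteDimensional 𝕜 (Submodule.span 𝕜 b) :=
    FiniteDimensional.span_of_finite 𝕜 hbfin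
  rw [← hbspan]
  exact hfd

end HPoly


/-- For `P ∈ 𝒫(^mE;F)` the following are equivalent: (a) `P` has finite
rank; (b) for every `k ≥ 1` the continuous linear operator `Δₖ¹ P : 𝒫(^kF) → 𝒫(^{mk}E)`,
`q ↦ q ∘ P`, has finite rank; (c) `Δₖ¹ P` has finite rank for some `k ≥ 1`. -/
theorem statement18 (𝕜 : Type*) [RCLike 𝕜] (E F : Type*)
    [NormedAddCommGroup E] [NormedSpace 𝕜 E] [CompleteSpace E]
    [NormedAddCommGroup F] [NormedSpace 𝕜 F] [CompleteSpace F]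
    (m : ℕ) (hm : 1 ≤ m) (P : E → F) (hP : IsHomPoly 𝕜 m P) :
    (FiniteDimensional 𝕜 (Submodule.span 𝕜 (Set.range P)) ↔
      ∀ k : ℕ, 1 ≤ k →
        ∃ T : HPoly 𝕜 k F 𝕜 →L[𝕜] HPoly 𝕜 (m * k) E 𝕜,
          (∀ (q : HPoly 𝕜 k F 𝕜) (x : E), T q x = q (P x)) ∧
          FiniteDimensional 𝕜
            (LinearMap.range (T : HPoly 𝕜 k F 𝕜 →ₗ[𝕜] HPoly 𝕜 (m * k) E 𝕜))) ∧
    (FiniteDimensional 𝕜 (Submodule.span 𝕜 (Set.range P)) ↔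
      ∃ k : ℕ, 1 ≤ k ∧
        ∃ T : HPoly 𝕜 k F 𝕜 →L[𝕜] HPoly 𝕜 (m * k) E 𝕜,
          (∀ (q : HPoly 𝕜 k F 𝕜) (x : E), T q x = q (P x)) ∧
          FiniteDimensional 𝕜
            (LinearMap.range (T : HPoly 𝕜 k F 𝕜 →ₗ[𝕜] HPoly 𝕜 (m * k) E 𝕜))) := by
  have a_to_b : FiniteDimensional 𝕜 (Submodule.span 𝕜 (Set.range P)) →
      ∀ k : ℕ, 1 ≤ k →
        ∃ T : HPoly 𝕜 k F 𝕜 →L[𝕜] HPoly 𝕜 (m * k) E 𝕜,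
          (∀ (q : HPoly 𝕜 k F 𝕜) (x : E), T q x = q (P x)) ∧
          FiniteDimensional 𝕜
            (LinearMap.range (T : HPoly 𝕜 k F 𝕜 →ₗ[𝕜] HPoly 𝕜 (m * k) E 𝕜)) := by
    intro ha k hk
    refine ⟨HPoly.delta hm hk P hP, fun q x => rfl, ?_⟩
    exact HPoly.range_fd P ha _ (fun q x => rfl)
  have c_to_a : (∃ k : ℕ, 1 ≤ k ∧
      ∃ T : HPoly 𝕜 k F 𝕜 →L[𝕜] HPoly 𝕜 (m * k) E 𝕜,
        (∀ (q : HPoly 𝕜 k F 𝕜) (x : E), T q x = q (P x)) ∧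
        FiniteDimensional 𝕜
          (LinearMap.range (T : HPoly 𝕜 k F 𝕜 →ₗ[𝕜] HPoly 𝕜 (m * k) E 𝕜))) →
      FiniteDimensional 𝕜 (Submodule.span 𝕜 (Set.range P)) := by
    rintro ⟨k, hk, T, hT, hfin⟩
    exact HPoly.span_fd hk P T hT hfin
  refine ⟨⟨a_to_b, fun hb => c_to_a ⟨1, le_refl 1, hb 1 (le_refl 1)⟩⟩,
    ⟨fun ha => ⟨1, le_refl 1, a_to_b ha 1 (le_refl 1)⟩, c_to_a⟩⟩
end

section
/- Let E, F, E₁, F₁ be Banach spaces over 𝕜 (= ℝ or ℂ), m, r, s ≥ 1, R ∈ 𝒫(^rE;F) and B ∈ 𝒫(^sE₁;F₁). Then the composition map S_{RB} : 𝒫(^mF₁;E) → 𝒫(^{mrs}E₁;F), S_{RB}(P) = R ∘ P ∘ B, is well defined and is a continuous r-homogeneous polynomial; in particular ‖S_{RB}(P)‖ ≤ ‖R‖·‖P‖^r·‖B‖^{mr} for every P ∈ 𝒫(^mF₁;E). -/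
open scoped NNReal ENNReal

section Aux

variable {𝕜 : Type*} [RCLike 𝕜]

lemma IsHomPoly.congr_deg {E F : Type*}
    [NormedAddCommGroup E] [NormedSpace 𝕜 E] [NormedAddCommGroup F] [NormedSpace 𝕜 F]
    {a b : ℕ} (h : a = b) {f : E → F} (hf : IsHomPoly 𝕜 a f) : IsHomPoly 𝕜 b f := by
  subst h; exact hf

/-- If `f` is a continuous `k`-multilinear map and each `g i` is a continuous `n`-homogeneous
polynomial, then `x ↦ f (g 0 x, …, g (k-1) x)` is an `n*k`-homogeneous polynomial. -/
lemma isHomPoly_comp_multi {X G H : Type*}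
    [NormedAddCommGroup X] [NormedSpace 𝕜 X] [NormedAddCommGroup G] [NormedSpace 𝕜 G]
    [NormedAddCommGroup H] [NormedSpace 𝕜 H] {k n : ℕ} (hn : 0 < n)
    (f : ContinuousMultilinearMap 𝕜 (fun _ : Fin k => G) H) (g : Fin k → X → G)
    (hg : ∀ i, IsHomPoly 𝕜 n (g i)) :
    IsHomPoly 𝕜 (n * k) fun x => f fun i => g i x := by
  choose A hA using hg
  set Q : ContinuousMultilinearMap 𝕜 (fun _ : Fin n => X) (Fin k → G) :=
    ContinuousMultilinearMap.pi A with hQ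
  set p : FormalMultilinearSeries 𝕜 X (Fin k → G) :=
    fun j => if h : n = j then h ▸ Q else 0 with hp
  have hpn : p n = Q := dif_pos rfl
  set c : Composition (n * k) :=
    ⟨List.replicate k n, fun hj => by rw [List.eq_of_mem_replicate hj]; exact hn,
      by simp [mul_comm]⟩ with hc
  have hlen : c.length = k := by simp [hc, Composition.length]
  have hbf : ∀ i, c.blocksFun i = n := fun i => by
    simp [hc, Composition.blocksFun, List.getElem_replicate]
  set f' : ContinuousMultilinearMap 𝕜 (fun _ : Fin k => (Fin k → G)) H :=
    f.compContinuousLinearMap (fun i => ContinuousLinearMap.proj i) with hf'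
  set f'' := f'.domDomCongr (finCongr hlen.symm) with hf''
  refine ⟨ContinuousMultilinearMap.compAlongComposition p c f'', fun x => ?_⟩
  rw [ContinuousMultilinearMap.compAlongComposition_apply]
  have hac : p.applyComposition c (fun _ => x) = fun _ => Q fun _ => x := by
    funext i
    show p (c.blocksFun i) ((fun _ => x) ∘ c.embedding i) = _
    rw [show ((fun _ : Fin (n * k) => x) ∘ c.embedding i) = fun _ => x from rfl,
      p.congr (w := fun _ => x) (hbf i) (fun _ _ _ => rfl), hpn]
  rw [hac]
  show f (fun i => g i x) = f' fun _ => Q fun _ => x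
  rw [hf']
  show f (fun i => g i x) = f fun i => (ContinuousLinearMap.proj (R := 𝕜) i) (Q fun _ => x)
  congr 1
  funext i
  rw [hA i x]
  rfl

lemma HPoly.norm_apply_le_s19 {m : ℕ} {E F : Type*}
    [NormedAddCommGroup E] [NormedSpace 𝕜 E] [NormedAddCommGroup F] [NormedSpace 𝕜 F]
    (hm : 1 ≤ m) (P : HPoly 𝕜 m E F) (x : E) : ‖P x‖ ≤ ‖P‖ * ‖x‖ ^ m := by
  rcases eq_or_ne x 0 with rfl | hx
  · obtain ⟨A, hA⟩ := P.isPoly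
    have h0 : P 0 = 0 := by
      rw [hA]; exact A.map_coord_zero ⟨0, hm⟩ rfl
    rw [h0, norm_zero, norm_zero, zero_pow (by omega), mul_zero]
  · set c : 𝕜 := ((‖x‖ : ℝ) : 𝕜) with hcdef
    have hc : c ≠ 0 := by
      simp only [hcdef, ne_eq, RCLike.ofReal_eq_zero]
      exact norm_ne_zero_iff.2 hx
    have hu : ‖(c⁻¹ • x : E)‖ ≤ 1 := by
      rw [norm_smul, norm_inv, hcdef, RCLike.norm_ofReal, abs_of_nonneg (norm_nonneg x),
        inv_mul_cancel₀ (norm_ne_zero_iff.2 hx)]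
    obtain ⟨A, hA⟩ := P.isPoly
    have key : P x = c ^ m • P (c⁻¹ • x) := by
      rw [hA x, hA (c⁻¹ • x)]
      have h2 := A.map_smul_univ (fun _ : Fin m => c) (fun _ : Fin m => c⁻¹ • x)
      rw [Finset.prod_const] at h2
      have h3 : (fun _ : Fin m => c • c⁻¹ • x) = fun _ : Fin m => x := by
        funext i
        rw [smul_smul, mul_inv_cancel₀ hc, one_smul]
      rw [h3] at h2
      simpa using h2
    have hP : ‖P (c⁻¹ • x)‖ ≤ ‖P‖ :=
      le_csSup (HPoly.bddAbove_image P) ⟨c⁻¹ • x, hu, rfl⟩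
    calc ‖P x‖ = ‖c‖ ^ m * ‖P (c⁻¹ • x)‖ := by rw [key, norm_smul, norm_pow]
      _ ≤ ‖c‖ ^ m * ‖P‖ := by
          exact mul_le_mul_of_nonneg_left hP (by positivity)
      _ = ‖P‖ * ‖x‖ ^ m := by
          rw [hcdef, RCLike.norm_ofReal, abs_of_nonneg (norm_nonneg x), mul_comm]

end Aux

/-- For `R ∈ 𝒫(^rE;F)` and `B ∈ 𝒫(^sE₁;F₁)`, the composition map
`S_{RB} : 𝒫(^mF₁;E) → 𝒫(^{mrs}E₁;F)`, `S_{RB} P = R ∘ P ∘ B`, is a well-defined continuous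
`r`-homogeneous polynomial with `‖S_{RB} P‖ ≤ ‖R‖ ⬝ ‖P‖^r ⬝ ‖B‖^{mr}`. -/
theorem statement19 (𝕜 : Type*) [RCLike 𝕜] (E F E₁ F₁ : Type*)
    [NormedAddCommGroup E] [NormedSpace 𝕜 E] [CompleteSpace E]
    [NormedAddCommGroup F] [NormedSpace 𝕜 F] [CompleteSpace F]
    [NormedAddCommGroup E₁] [NormedSpace 𝕜 E₁] [CompleteSpace E₁]
    [NormedAddCommGroup F₁] [NormedSpace 𝕜 F₁] [CompleteSpace F₁]
    (m r s : ℕ) (hm : 1 ≤ m) (hr : 1 ≤ r) (hs : 1 ≤ s)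
    (R : HPoly 𝕜 r E F) (B : HPoly 𝕜 s E₁ F₁) :
    ∃ S : HPoly 𝕜 m F₁ E → HPoly 𝕜 (m * r * s) E₁ F,
      (∀ (P : HPoly 𝕜 m F₁ E) (x : E₁), S P x = R (P (B x))) ∧
      IsHomPoly 𝕜 r S ∧
      ∀ P : HPoly 𝕜 m F₁ E, ‖S P‖ ≤ ‖R‖ * ‖P‖ ^ r * ‖B‖ ^ (m * r) := by
  obtain ⟨AR, hAR⟩ := R.isPoly
  have hpoly : ∀ Pv : Fin r → HPoly 𝕜 m F₁ E,
      IsHomPoly 𝕜 (m * r * s) fun x => AR fun i => Pv i (B x) := by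
    intro Pv
    have hg : ∀ i : Fin r, IsHomPoly 𝕜 (s * m) fun x => Pv i (B x) := by
      intro i
      obtain ⟨AP, hAP⟩ := (Pv i).isPoly
      have heq : (fun x => AP fun _ => B x) = fun x => Pv i (B x) := by
        funext x; rw [hAP]
      rw [← heq]
      exact isHomPoly_comp_multi (by omega) AP (fun _ => ⇑B) (fun _ => B.isPoly)
    exact (isHomPoly_comp_multi (Nat.mul_pos hs hm) AR (fun i x => Pv i (B x)) hg).congr_deg
      (by ring)
  have hBx : ∀ x : E₁, ‖x‖ ≤ 1 → ‖B x‖ ≤ ‖B‖ := fun x hx => by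
    calc ‖B x‖ ≤ ‖B‖ * ‖x‖ ^ s := HPoly.norm_apply_le_s19 hs B x
      _ ≤ ‖B‖ * 1 := by
          exact mul_le_mul_of_nonneg_left (pow_le_one₀ (norm_nonneg x) hx) (norm_nonneg B)
      _ = ‖B‖ := mul_one _
  set Sm : MultilinearMap 𝕜 (fun _ : Fin r => HPoly 𝕜 m F₁ E) (HPoly 𝕜 (m * r * s) E₁ F) :=
    { toFun := fun Pv => ⟨fun x => AR fun i => Pv i (B x), hpoly Pv⟩
      map_update_add' := by
        intro inst Pv j P Q
        cases Subsingleton.elim inst (instDecidableEqFin _)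
        ext x
        show AR (fun i => Function.update Pv j (P + Q) i (B x)) =
          AR (fun i => Function.update Pv j P i (B x)) +
            AR (fun i => Function.update Pv j Q i (B x))
        have key : ∀ z : HPoly 𝕜 m F₁ E,
            (fun i => Function.update Pv j z i (B x)) =
              Function.update (fun i => Pv i (B x)) j (z (B x)) := fun z =>
          funext fun i => Function.apply_update (fun _ P => P (B x)) Pv j z i
        rw [key, key, key, HPoly.add_apply, AR.map_update_add]
      map_update_smul' := by
        intro inst Pv j c P
        cases Subsingleton.elim inst (instDecidableEqFin _)
        ext x
        show AR (fun i => Function.update Pv j (c • P) i (B x)) =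
          c • AR (fun i => Function.update Pv j P i (B x))
        have key : ∀ z : HPoly 𝕜 m F₁ E,
            (fun i => Function.update Pv j z i (B x)) =
              Function.update (fun i => Pv i (B x)) j (z (B x)) := fun z =>
          funext fun i => Function.apply_update (fun _ P => P (B x)) Pv j z i
        rw [key, key, HPoly.smul_apply, AR.map_update_smul] } with hSm
  have hbound : ∀ Pv : Fin r → HPoly 𝕜 m F₁ E,
      ‖Sm Pv‖ ≤ (‖AR‖ * ‖B‖ ^ (m * r)) * ∏ i, ‖Pv i‖ := by
    intro Pv
    rw [HPoly.norm_def, polyNorm]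
    refine Real.sSup_le ?_ (by positivity)
    rintro t ⟨x, hx, rfl⟩
    show ‖AR fun i => Pv i (B x)‖ ≤ _
    calc ‖AR fun i => Pv i (B x)‖ ≤ ‖AR‖ * ∏ i, ‖Pv i (B x)‖ := AR.le_opNorm _
      _ ≤ ‖AR‖ * ∏ i, (‖Pv i‖ * ‖B‖ ^ m) := by
          refine mul_le_mul_of_nonneg_left ?_ (norm_nonneg AR)
          refine Finset.prod_le_prod (fun i _ => norm_nonneg _) fun i _ => ?_
          calc ‖Pv i (B x)‖ ≤ ‖Pv i‖ * ‖B x‖ ^ m := HPoly.norm_apply_le_s19 hm _ _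
            _ ≤ ‖Pv i‖ * ‖B‖ ^ m := by
                refine mul_le_mul_of_nonneg_left ?_ (norm_nonneg _)
                exact pow_le_pow_left₀ (norm_nonneg _) (hBx x hx) m
      _ = (‖AR‖ * ‖B‖ ^ (m * r)) * ∏ i, ‖Pv i‖ := by
          rw [Finset.prod_mul_distrib, Finset.prod_const, Finset.card_univ, Fintype.card_fin,
            ← pow_mul]
          ring
  set SC := Sm.mkContinuous (‖AR‖ * ‖B‖ ^ (m * r)) hbound with hSC
  refine ⟨fun P => SC fun _ => P, fun P x => ?_, ⟨SC, fun P => rfl⟩, fun P => ?_⟩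
  · show AR (fun _ => P (B x)) = R (P (B x))
    rw [hAR]
  · show ‖SC fun _ => P‖ ≤ _
    rw [HPoly.norm_def, polyNorm]
    refine Real.sSup_le ?_ (by positivity)
    rintro t ⟨x, hx, rfl⟩
    show ‖AR fun _ : Fin r => P (B x)‖ ≤ _
    rw [← hAR (P (B x))]
    calc ‖R (P (B x))‖ ≤ ‖R‖ * ‖P (B x)‖ ^ r := HPoly.norm_apply_le_s19 hr R _
      _ ≤ ‖R‖ * (‖P‖ * ‖B‖ ^ m) ^ r := by
          refine mul_le_mul_of_nonneg_left ?_ (norm_nonneg R)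
          refine pow_le_pow_left₀ (norm_nonneg _) ?_ r
          calc ‖P (B x)‖ ≤ ‖P‖ * ‖B x‖ ^ m := HPoly.norm_apply_le_s19 hm P _
            _ ≤ ‖P‖ * ‖B‖ ^ m := by
                refine mul_le_mul_of_nonneg_left ?_ (norm_nonneg _)
                exact pow_le_pow_left₀ (norm_nonneg _) (hBx x hx) m
      _ = ‖R‖ * ‖P‖ ^ r * ‖B‖ ^ (m * r) := by rw [mul_pow, ← pow_mul]; ring
end
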